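/- arXiv:2003.10787 — 2 statements merged into one kernel-verified Lean document; each statement's English description precedes it below -/
import Mathlib

section
/- Any Cauchy sequence {f_n} in (D[0,1], ρ) converges pointwise, except possibly on an at most countable subset of [0,1), to a càdlàg function; namely there exists g ∈ D[0,1] and an at most countable set N ⊆ [0,1) such that f_n(s) → g(s) for all s ∈ [0,1] \ N. -/
open Filter

/-- A càdlàg function on `[0,1]`: right-continuous on `[0,1)`, left limits on `(0,1]`. -/
def Cadlag (f : unitInterval → ℝ) : Prop :=
  (∀ t : unitInterval, (t : ℝ) < 1 →
    Filter.Tendsto f (nhdsWithin t (Set.Ioi t)) (nhds (f t))) ∧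
  (∀ t : unitInterval, 0 < (t : ℝ) →
    ∃ l : ℝ, Filter.Tendsto f (nhdsWithin t (Set.Iio t)) (nhds l))

/-- Increasing homeomorphism of `[0,1]` onto itself. -/
def IsIncHomeo (γ : unitInterval → unitInterval) : Prop :=
  Continuous γ ∧ StrictMono γ ∧ Function.Bijective γ

/-- `Σ`: continuous non-decreasing surjections of `[0,1]` onto itself. -/
def InSigma (σ : unitInterval → unitInterval) : Prop :=
  Continuous σ ∧ Monotone σ ∧ Function.Surjective σ

/-- Skorokhod distance on functions on `[0,1]`. -/
noncomputable def skorokhodDist (f g : unitInterval → ℝ) : ℝ :=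
  sInf { c : ℝ | ∃ γ : unitInterval → unitInterval, IsIncHomeo γ ∧
    (⨆ s : unitInterval, |f s - g (γ s)|) + (⨆ s : unitInterval, |(s : ℝ) - (γ s : ℝ)|) = c }

/-- Extended Skorokhod semi-distance on turbofunctions. -/
noncomputable def rhoPlus (P Q : (unitInterval → ℝ) × (unitInterval → unitInterval)) : ℝ :=
  sInf { c : ℝ | ∃ γ : unitInterval → unitInterval, IsIncHomeo γ ∧
    (⨆ t : unitInterval, |P.1 (γ t) - Q.1 t|) +
    (⨆ t : unitInterval, |(P.2 (γ t) : ℝ) - (Q.2 t : ℝ)|) = c }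

instance : Fact ((0:ℝ) ≤ 1) := ⟨zero_le_one⟩

/-- Right-continuous inverse `σ⁻¹(s) = max {t : σ t ≤ s}` (as a supremum). -/
noncomputable def rcInv (σ : unitInterval → unitInterval) (s : unitInterval) : unitInterval :=
  sSup {t : unitInterval | σ t ≤ s}

open Set

lemma lt_one_iff {t : unitInterval} : t < 1 ↔ (t:ℝ) < 1 := by
  rw [← Subtype.coe_lt_coe, Set.Icc.coe_one]

lemma pos_iff {t : unitInterval} : 0 < t ↔ 0 < (t:ℝ) := by
  rw [← Subtype.coe_lt_coe, Set.Icc.coe_zero]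

lemma incHomeo_id : IsIncHomeo id :=
  ⟨continuous_id, fun _ _ h => h, Function.bijective_id⟩

lemma IsIncHomeo.comp' {γ δ : unitInterval → unitInterval} (hγ : IsIncHomeo γ)
    (hδ : IsIncHomeo δ) : IsIncHomeo (γ ∘ δ) :=
  ⟨hγ.1.comp hδ.1, hγ.2.1.comp hδ.2.1, hγ.2.2.comp hδ.2.2⟩

lemma IsIncHomeo.map_zero {γ} (h : IsIncHomeo γ) : γ 0 = 0 := by
  obtain ⟨a, ha⟩ := h.2.2.2 0
  have h2 : γ 0 ≤ γ a := h.2.1.monotone unitInterval.nonneg'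
  rw [ha] at h2
  exact le_antisymm h2 unitInterval.nonneg'

lemma IsIncHomeo.map_one {γ} (h : IsIncHomeo γ) : γ 1 = 1 := by
  obtain ⟨a, ha⟩ := h.2.2.2 1
  have h2 : γ a ≤ γ 1 := h.2.1.monotone unitInterval.le_one'
  rw [ha] at h2
  exact le_antisymm unitInterval.le_one' h2

lemma nhds_eq_sup (t : unitInterval) :
    nhds t = nhdsWithin t (Iio t) ⊔ (pure t ⊔ nhdsWithin t (Ioi t)) := by
  conv_lhs => rw [← nhdsWithin_univ t]
  have huniv : (univ : Set unitInterval) = Iio t ∪ ({t} ∪ Ioi t) := by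
    ext u
    simp only [mem_univ, true_iff, mem_union, mem_Iio, mem_singleton_iff, mem_Ioi]
    rcases lt_trichotomy u t with h|h|h <;> tauto
  rw [huniv, nhdsWithin_union, nhdsWithin_union, nhdsWithin_singleton]

lemma Ioi_one : (Ioi (1 : unitInterval)) = ∅ := by
  ext u; simp only [mem_Ioi, mem_empty_iff_false, iff_false, not_lt]
  exact unitInterval.le_one'

lemma Iio_zero : (Iio (0 : unitInterval)) = ∅ := by
  ext u; simp only [mem_Iio, mem_empty_iff_false, iff_false, not_lt]
  exact unitInterval.nonneg'

lemma Cadlag.tendsto_right {F} (hF : Cadlag F) (t : unitInterval) :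
    Tendsto F (nhdsWithin t (Ioi t)) (nhds (F t)) := by
  rcases lt_or_ge (t:ℝ) 1 with h | h
  · exact hF.1 t h
  · have ht : t = 1 := le_antisymm unitInterval.le_one' (by
      rw [← Subtype.coe_le_coe, Set.Icc.coe_one]; exact h)
    rw [ht, Ioi_one, nhdsWithin_empty]
    exact tendsto_bot

lemma Cadlag.exists_left {F} (hF : Cadlag F) (t : unitInterval) :
    ∃ l, Tendsto F (nhdsWithin t (Iio t)) (nhds l) := by
  rcases lt_or_ge 0 (t:ℝ) with h | h
  · exact hF.2 t h
  · have ht : t = 0 := le_antisymm (by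
      rw [← Subtype.coe_le_coe, Set.Icc.coe_zero]; exact h) unitInterval.nonneg'
    exact ⟨F t, by rw [ht, Iio_zero, nhdsWithin_empty]; exact tendsto_bot⟩

lemma Cadlag.continuousAt {F} (hF : Cadlag F) {t : unitInterval}
    (hl : Tendsto F (nhdsWithin t (Iio t)) (nhds (F t))) : ContinuousAt F t := by
  rw [ContinuousAt, nhds_eq_sup t, Filter.tendsto_sup]
  exact ⟨hl, Filter.tendsto_sup.2 ⟨tendsto_pure_nhds _ _, hF.tendsto_right t⟩⟩

lemma Cadlag.bounded {F} (hF : Cadlag F) : ∃ C : ℝ, ∀ t, |F t| ≤ C := by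
  have key : ∀ t : unitInterval, ∃ c : ℝ, {u | |F u| ≤ c} ∈ nhds t := by
    intro t
    obtain ⟨l, hl⟩ := hF.exists_left t
    refine ⟨max (|F t| + 1) (|l| + 1), ?_⟩
    rw [nhds_eq_sup t, Filter.mem_sup, Filter.mem_sup]
    refine ⟨?_, ?_, ?_⟩
    · have h1 := Metric.tendsto_nhds.1 hl 1 one_pos
      filter_upwards [h1] with u hu
      rw [Real.dist_eq] at hu
      have : |F u| ≤ |l| + 1 := by
        have := abs_sub_abs_le_abs_sub (F u) l
        linarith
      exact le_trans this (le_max_right _ _)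
    · simp only [mem_pure, mem_setOf_eq]
      exact le_trans (by linarith [abs_nonneg (F t)]) (le_max_left (|F t| + 1) (|l| + 1))
    · have h1 := Metric.tendsto_nhds.1 (hF.tendsto_right t) 1 one_pos
      filter_upwards [h1] with u hu
      rw [Real.dist_eq] at hu
      have : |F u| ≤ |F t| + 1 := by
        have := abs_sub_abs_le_abs_sub (F u) (F t)
        linarith
      exact le_trans this (le_max_left _ _)
  choose c hc using key
  obtain ⟨T, -, hT⟩ := isCompact_univ.elim_nhds_subcover
    (fun t => {u | |F u| ≤ c t}) (fun t _ => hc t)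
  have h0 : ∃ t ∈ T, |F 0| ≤ c t := by
    have := hT (mem_univ 0)
    simpa only [mem_iUnion, exists_prop, mem_setOf_eq] using this
  obtain ⟨t0, ht0, -⟩ := h0
  have hTne : T.Nonempty := ⟨t0, ht0⟩
  refine ⟨T.sup' hTne c, fun u => ?_⟩
  have := hT (mem_univ u)
  simp only [mem_iUnion, exists_prop, mem_setOf_eq] at this
  obtain ⟨t, ht, hu⟩ := this
  exact le_trans hu (Finset.le_sup' c ht)



lemma abs_sub_le_of_abs {a b Ca Cb : ℝ} (ha : |a| ≤ Ca) (hb : |b| ≤ Cb) :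
    |a - b| ≤ Ca + Cb := by
  calc |a - b| = |a + -b| := by rw [sub_eq_add_neg]
  _ ≤ |a| + |-b| := abs_add_le _ _
  _ ≤ Ca + Cb := by rw [abs_neg]; exact add_le_add ha hb

lemma coe_abs_sub_le (s u : unitInterval) : |(s:ℝ) - (u:ℝ)| ≤ 2 := by
  have hs := s.2; have hu := u.2
  simp only [Set.mem_Icc] at hs hu
  rw [abs_sub_le_iff]; constructor <;> linarith

lemma skorokhod_extract {p q : unitInterval → ℝ} {Cp Cq : ℝ}
    (hp : ∀ t, |p t| ≤ Cp) (hq : ∀ t, |q t| ≤ Cq) {ε : ℝ}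
    (h : skorokhodDist p q < ε) :
    ∃ γ, IsIncHomeo γ ∧ (∀ t, |p t - q (γ t)| ≤ ε) ∧
      (∀ t : unitInterval, |(t:ℝ) - (γ t : ℝ)| ≤ ε) := by
  set S := { c : ℝ | ∃ γ : unitInterval → unitInterval, IsIncHomeo γ ∧
    (⨆ s : unitInterval, |p s - q (γ s)|) + (⨆ s : unitInterval, |(s : ℝ) - (γ s : ℝ)|) = c }
    with hS
  have hSne : S.Nonempty := ⟨_, id, incHomeo_id, rfl⟩
  have hSbd : BddBelow S := by
    refine ⟨0, ?_⟩
    rintro c ⟨γ, hγ, rfl⟩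
    have h1 : (0:ℝ) ≤ ⨆ s : unitInterval, |p s - q (γ s)| :=
      Real.iSup_nonneg (fun s => abs_nonneg _)
    have h2 : (0:ℝ) ≤ ⨆ s : unitInterval, |(s:ℝ) - (γ s : ℝ)| :=
      Real.iSup_nonneg (fun s => abs_nonneg _)
    linarith
  rw [skorokhodDist] at h
  obtain ⟨c, hcS, hcε⟩ := (csInf_lt_iff hSbd hSne).1 h
  obtain ⟨γ, hγ, hc⟩ := hcS
  have hbd1 : BddAbove (Set.range fun s : unitInterval => |p s - q (γ s)|) := by
    refine ⟨Cp + Cq, ?_⟩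
    rintro x ⟨u, rfl⟩
    exact abs_sub_le_of_abs (hp u) (hq _)
  have hbd2 : BddAbove (Set.range fun s : unitInterval => |(s:ℝ) - (γ s : ℝ)|) := by
    refine ⟨2, ?_⟩
    rintro x ⟨u, rfl⟩
    exact coe_abs_sub_le _ _
  have h1 : (0:ℝ) ≤ ⨆ s : unitInterval, |p s - q (γ s)| :=
    Real.iSup_nonneg (fun s => abs_nonneg _)
  have h2 : (0:ℝ) ≤ ⨆ s : unitInterval, |(s:ℝ) - (γ s : ℝ)| :=
    Real.iSup_nonneg (fun s => abs_nonneg _)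
  refine ⟨γ, hγ, fun t => ?_, fun t => ?_⟩
  · have := le_ciSup hbd1 t
    have h3 : (⨆ s : unitInterval, |p s - q (γ s)|) ≤ c := by rw [← hc]; linarith
    linarith
  · have := le_ciSup hbd2 t
    have h3 : (⨆ s : unitInterval, |(s:ℝ) - (γ s:ℝ)|) ≤ c := by rw [← hc]; linarith
    linarith

lemma tendsto_homeo_Ioi {γ : unitInterval → unitInterval} (hγ : IsIncHomeo γ)
    (t : unitInterval) :
    Tendsto γ (nhdsWithin t (Ioi t)) (nhdsWithin (γ t) (Ioi (γ t))) := by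
  rw [tendsto_nhdsWithin_iff]
  refine ⟨(hγ.1.tendsto t).mono_left nhdsWithin_le_nhds, ?_⟩
  exact Filter.Eventually.mono self_mem_nhdsWithin (fun u hu => hγ.2.1 hu)

lemma tendsto_homeo_Iio {γ : unitInterval → unitInterval} (hγ : IsIncHomeo γ)
    (t : unitInterval) :
    Tendsto γ (nhdsWithin t (Iio t)) (nhdsWithin (γ t) (Iio (γ t))) := by
  rw [tendsto_nhdsWithin_iff]
  refine ⟨(hγ.1.tendsto t).mono_left nhdsWithin_le_nhds, ?_⟩
  exact Filter.Eventually.mono self_mem_nhdsWithin (fun u hu => hγ.2.1 hu)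

lemma Cadlag.comp_homeo {F : unitInterval → ℝ} {γ} (hF : Cadlag F) (hγ : IsIncHomeo γ) :
    Cadlag (fun t => F (γ t)) := by
  constructor
  · intro t ht
    have ht' : t < 1 := lt_one_iff.2 ht
    have hγt : (γ t : ℝ) < 1 := by
      have : γ t < γ 1 := hγ.2.1 ht'
      rw [hγ.map_one] at this
      exact lt_one_iff.1 this
    exact (hF.1 (γ t) hγt).comp (tendsto_homeo_Ioi hγ t)
  · intro t ht
    have ht' : 0 < t := pos_iff.2 ht
    have hγt : 0 < (γ t : ℝ) := by
      have : γ 0 < γ t := hγ.2.1 ht'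
      rw [hγ.map_zero] at this
      exact pos_iff.1 this
    obtain ⟨l, hl⟩ := hF.2 (γ t) hγt
    exact ⟨l, hl.comp (tendsto_homeo_Iio hγ t)⟩

lemma abs_sub_le' (a b : ℝ) : |a - b| ≤ |a| + |b| :=
  abs_sub_le_of_abs (le_refl _) (le_refl _)

lemma cadlag_of_unif (G : ℕ → unitInterval → ℝ) (F : unitInterval → ℝ) (c : ℕ → ℝ)
    (hG : ∀ m, Cadlag (G m)) (hc : Tendsto c atTop (nhds 0))
    (hb : ∀ m t, |G m t - F t| ≤ c m) : Cadlag F := by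
  have hev : ∀ ε : ℝ, 0 < ε → ∀ᶠ m in atTop, c m < ε := by
    intro ε hε
    filter_upwards [Metric.tendsto_nhds.1 hc ε hε] with m hm
    rw [Real.dist_eq, sub_zero] at hm
    exact lt_of_le_of_lt (le_abs_self _) hm
  constructor
  · intro t ht
    rw [Metric.tendsto_nhds]
    intro ε hε
    obtain ⟨m, hm⟩ := (hev (ε/3) (by linarith)).exists
    have h2 := Metric.tendsto_nhds.1 ((hG m).1 t ht) (ε/3) (by linarith)
    filter_upwards [h2] with u hu
    rw [Real.dist_eq] at hu ⊢
    have h3 := hb m u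
    have h4 := hb m t
    have e : F u - F t = -(G m u - F u) + ((G m u - G m t) + (G m t - F t)) := by ring
    rw [e]
    have h5 := abs_add_le (-(G m u - F u)) ((G m u - G m t) + (G m t - F t))
    have h6 := abs_add_le (G m u - G m t) (G m t - F t)
    rw [abs_neg] at h5
    linarith
  · intro t ht
    have hne : (nhdsWithin t (Iio t)).NeBot := nhdsWithin_Iio_self_neBot' ⟨0, pos_iff.2 ht⟩
    choose l hl using fun m => (hG m).exists_left t
    have hcau : CauchySeq l := by
      rw [Metric.cauchySeq_iff]
      intro ε hε
      obtain ⟨N, hN⟩ := eventually_atTop.1 (hev (ε/3) (by linarith))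
      refine ⟨N, fun m hm n hn => ?_⟩
      have key : dist (l m) (l n) ≤ c m + c n := by
        have h1 : Tendsto (fun u => dist (G m u) (G n u)) (nhdsWithin t (Iio t))
            (nhds (dist (l m) (l n))) := (hl m).dist (hl n)
        refine le_of_tendsto h1 (Filter.Eventually.of_forall (fun u => ?_))
        rw [Real.dist_eq]
        have e : G m u - G n u = (G m u - F u) - (G n u - F u) := by ring
        rw [e]
        exact abs_sub_le_of_abs (hb m u) (hb n u)
      have := hN m hm
      have := hN n hn
      linarith
    obtain ⟨l', hl'⟩ := cauchySeq_tendsto_of_complete hcau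
    refine ⟨l', ?_⟩
    rw [Metric.tendsto_nhds]
    intro ε hε
    obtain ⟨m, hm1, hm2⟩ := ((hev (ε/3) (by linarith)).and
      (Metric.tendsto_nhds.1 hl' (ε/3) (by linarith))).exists
    have h2 := Metric.tendsto_nhds.1 (hl m) (ε/3) (by linarith)
    filter_upwards [h2] with u hu
    rw [Real.dist_eq] at hu hm2 ⊢
    have h3 := hb m u
    have e : F u - l' = -(G m u - F u) + ((G m u - l m) + (l m - l')) := by ring
    rw [e]
    have h5 := abs_add_le (-(G m u - F u)) ((G m u - l m) + (l m - l'))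
    have h6 := abs_add_le (G m u - l m) (l m - l')
    rw [abs_neg] at h5
    linarith

lemma cadlag_jumps_finite {F} (hF : Cadlag F) {ε : ℝ} (hε : 0 < ε) :
    {t : unitInterval | ∃ l, Tendsto F (nhdsWithin t (Iio t)) (nhds l) ∧
      ε ≤ |F t - l|}.Finite := by
  by_contra hinf
  have hinf : {t : unitInterval | ∃ l, Tendsto F (nhdsWithin t (Iio t)) (nhds l) ∧
      ε ≤ |F t - l|}.Infinite := hinf
  set e := hinf.natEmbedding with he
  obtain ⟨a, -, φ, hφ, hconv⟩ := isCompact_univ.tendsto_subseq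
    (x := fun n => (e n : unitInterval)) (fun n => mem_univ _)
  set u : ℕ → unitInterval := fun j => (e (φ j) : unitInterval) with hu
  have hu_mem : ∀ j, ∃ l, Tendsto F (nhdsWithin (u j) (Iio (u j))) (nhds l) ∧
      ε ≤ |F (u j) - l| := fun j => (e (φ j)).2
  have hu_inj : Function.Injective u := by
    intro i j hij
    exact hφ.injective (e.injective (Subtype.ext hij))
  have hconv : Tendsto u atTop (nhds a) := hconv
  have hside : (∃ᶠ j in atTop, u j < a) ∨ (∃ᶠ j in atTop, a < u j) := by
    by_contra hcon
    push_neg at hcon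
    obtain ⟨h1, h2⟩ := hcon
    have h3 : ∀ᶠ j in atTop, u j = a := by
      filter_upwards [h1, h2] with j hj1 hj2
      exact le_antisymm hj2 hj1
    obtain ⟨N, hN⟩ := eventually_atTop.1 h3
    have h4 : u N = u (N+1) := (hN N le_rfl).trans (hN (N+1) (by omega)).symm
    have := hu_inj h4
    omega
  rcases hside with hL | hR
  · obtain ⟨l, hl⟩ := hF.exists_left a
    have hev : ∀ᶠ v in nhdsWithin a (Iio a), |F v - l| < ε/4 := by
      filter_upwards [Metric.tendsto_nhds.1 hl (ε/4) (by linarith)] with v hv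
      rwa [Real.dist_eq] at hv
    obtain ⟨j0, hj0⟩ := hL.exists
    obtain ⟨cc, hcc, hIoo⟩ := (mem_nhdsLT_iff_exists_Ioo_subset' hj0).1 hev
    have hev2 : ∀ᶠ j in atTop, cc < u j := hconv (Ioi_mem_nhds hcc)
    obtain ⟨j, hj1, hj2⟩ := (hev2.and_frequently hL).exists
    obtain ⟨lw, hlw, hjump⟩ := hu_mem j
    have hw1 : |F (u j) - l| < ε/4 := hIoo ⟨hj1, hj2⟩
    have hne : (nhdsWithin (u j) (Iio (u j))).NeBot := nhdsWithin_Iio_self_neBot' ⟨cc, hj1⟩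
    have hev3 : ∀ᶠ v in nhdsWithin (u j) (Iio (u j)), |F v - l| ≤ ε/4 := by
      have hmem : Ioo cc (u j) ∈ nhdsWithin (u j) (Iio (u j)) :=
        Ioo_mem_nhdsLT_of_mem ⟨hj1, le_refl (u j)⟩
      filter_upwards [hmem] with v hv
      exact le_of_lt (hIoo ⟨hv.1, lt_trans hv.2 hj2⟩)
    have h4 : |lw - l| ≤ ε/4 := by
      have htend : Tendsto (fun v => |F v - l|) (nhdsWithin (u j) (Iio (u j)))
          (nhds (|lw - l|)) := ((hlw.sub_const l).abs)
      exact le_of_tendsto htend hev3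
    have h5 : |F (u j) - lw| ≤ |F (u j) - l| + |lw - l| := by
      have e2 : F (u j) - lw = (F (u j) - l) - (lw - l) := by ring
      rw [e2]; exact abs_sub_le' _ _
    linarith
  · have hev : ∀ᶠ v in nhdsWithin a (Ioi a), |F v - F a| < ε/4 := by
      filter_upwards [Metric.tendsto_nhds.1 (hF.tendsto_right a) (ε/4) (by linarith)] with v hv
      rwa [Real.dist_eq] at hv
    obtain ⟨j0, hj0⟩ := hR.exists
    obtain ⟨cc, hcc, hIoo⟩ := (mem_nhdsGT_iff_exists_Ioo_subset' hj0).1 hev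
    have hev2 : ∀ᶠ j in atTop, u j < cc := hconv (Iio_mem_nhds hcc)
    obtain ⟨j, hj1, hj2⟩ := (hev2.and_frequently hR).exists
    obtain ⟨lw, hlw, hjump⟩ := hu_mem j
    have hw1 : |F (u j) - F a| < ε/4 := hIoo ⟨hj2, hj1⟩
    have hne : (nhdsWithin (u j) (Iio (u j))).NeBot := nhdsWithin_Iio_self_neBot' ⟨a, hj2⟩
    have hev3 : ∀ᶠ v in nhdsWithin (u j) (Iio (u j)), |F v - F a| ≤ ε/4 := by
      have hmem : Ioo a (u j) ∈ nhdsWithin (u j) (Iio (u j)) :=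
        Ioo_mem_nhdsLT_of_mem ⟨hj2, le_refl (u j)⟩
      filter_upwards [hmem] with v hv
      exact le_of_lt (hIoo ⟨hv.1, lt_trans hv.2 hj1⟩)
    have h4 : |lw - F a| ≤ ε/4 := by
      have htend : Tendsto (fun v => |F v - F a|) (nhdsWithin (u j) (Iio (u j)))
          (nhds (|lw - F a|)) := ((hlw.sub_const (F a)).abs)
      exact le_of_tendsto htend hev3
    have h5 : |F (u j) - lw| ≤ |F (u j) - F a| + |lw - F a| := by
      have e2 : F (u j) - lw = (F (u j) - F a) - (lw - F a) := by ring
      rw [e2]; exact abs_sub_le' _ _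
    linarith

lemma cadlag_countable_discont {F} (hF : Cadlag F) :
    {t : unitInterval | ¬ContinuousAt F t}.Countable := by
  have hsub : {t : unitInterval | ¬ContinuousAt F t} ⊆
      ⋃ n : ℕ, {t : unitInterval | ∃ l, Tendsto F (nhdsWithin t (Iio t)) (nhds l) ∧
        (1:ℝ)/(n+1) ≤ |F t - l|} := by
    intro t ht
    obtain ⟨l, hl⟩ := hF.exists_left t
    have hne : l ≠ F t := by
      intro h
      exact ht (hF.continuousAt (h ▸ hl))
    have hpos : 0 < |F t - l| := abs_pos.2 (sub_ne_zero.2 (Ne.symm hne))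
    obtain ⟨n, hn⟩ := exists_nat_one_div_lt hpos
    exact mem_iUnion.2 ⟨n, l, hl, le_of_lt hn⟩
  refine Set.Countable.mono hsub (Set.countable_iUnion fun n => ?_)
  exact (cadlag_jumps_finite hF (by positivity)).countable

section RcInv

variable {σ : unitInterval → unitInterval}

lemma rcInv_spec (hcont : Continuous σ) (h0 : σ 0 = 0) (s : unitInterval) :
    σ (rcInv σ s) ≤ s := by
  have hcl : IsClosed {t : unitInterval | σ t ≤ s} := isClosed_Iic.preimage hcont
  have hne : {t : unitInterval | σ t ≤ s}.Nonempty := ⟨0, by simp [h0, unitInterval.nonneg']⟩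
  exact hcl.sSup_mem hne

lemma le_rcInv {t s : unitInterval} (h : σ t ≤ s) : t ≤ rcInv σ s := le_sSup h

lemma sigma_rcInv (hcont : Continuous σ) (h0 : σ 0 = 0) (h1 : σ 1 = 1)
    (s : unitInterval) : σ (rcInv σ s) = s := by
  rcases eq_or_lt_of_le (rcInv_spec hcont h0 s) with h | h
  · exact h
  · exfalso
    have hmem : s ∈ Icc (σ (rcInv σ s)) (σ 1) := by
      rw [h1]; exact ⟨le_of_lt h, unitInterval.le_one'⟩
    obtain ⟨t, htmem, ht⟩ := intermediate_value_Icc (unitInterval.le_one' : rcInv σ s ≤ 1)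
      hcont.continuousOn hmem
    have h2 : t ≤ rcInv σ s := le_rcInv (le_of_eq ht)
    have h3 : t = rcInv σ s := le_antisymm h2 htmem.1
    rw [h3] at ht
    rw [ht] at h
    exact lt_irrefl s h

lemma rcInv_mono : Monotone (rcInv σ) := by
  intro s s' h
  exact sSup_le_sSup (fun t ht => le_trans ht h)

lemma rcInv_injective (hcont : Continuous σ) (h0 : σ 0 = 0) (h1 : σ 1 = 1) :
    Function.Injective (rcInv σ) := by
  intro a b h
  have := congrArg σ h
  rwa [sigma_rcInv hcont h0 h1, sigma_rcInv hcont h0 h1] at this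

lemma rcInv_one : rcInv σ 1 = 1 :=
  le_antisymm unitInterval.le_one' (le_rcInv unitInterval.le_one')

lemma rcInv_right_tendsto (hcont : Continuous σ) (hmono : Monotone σ)
    (h0 : σ 0 = 0) (h1 : σ 1 = 1) {s : unitInterval} (hs : s < 1) :
    Tendsto (rcInv σ) (nhdsWithin s (Ioi s)) (nhds (rcInv σ s)) := by
  have ht := MonotoneOn.tendsto_nhdsGT (f := rcInv σ) (x := s)
    (rcInv_mono.monotoneOn (Ioi s)) (OrderBot.bddBelow _)
  have heq : sInf (rcInv σ '' Ioi s) = rcInv σ s := by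
    apply le_antisymm
    · set L := sInf (rcInv σ '' Ioi s) with hL
      have hLle : ∀ s' ∈ Ioi s, σ L ≤ s' := by
        intro s' hs'
        have h1' : L ≤ rcInv σ s' := csInf_le (OrderBot.bddBelow _) (mem_image_of_mem _ hs')
        calc σ L ≤ σ (rcInv σ s') := hmono h1'
        _ = s' := sigma_rcInv hcont h0 h1 s'
      have hσL : σ L ≤ s := by
        by_contra hgt
        push_neg at hgt
        obtain ⟨b, hb1, hb2⟩ := exists_between hgt
        exact absurd (hLle b hb1) (not_le.2 hb2)
      exact le_rcInv hσL
    · refine le_csInf ⟨rcInv σ 1, mem_image_of_mem _ hs⟩ ?_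
      rintro b ⟨s', hs', rfl⟩
      exact rcInv_mono (le_of_lt hs')
  rwa [heq] at ht

lemma cadlag_comp_rcInv {F : unitInterval → ℝ} (hF : Cadlag F)
    (hcont : Continuous σ) (hmono : Monotone σ) (h0 : σ 0 = 0) (h1 : σ 1 = 1) :
    Cadlag (fun s => F (rcInv σ s)) := by
  constructor
  · intro s hs
    have hs' : s < 1 := lt_one_iff.2 hs
    rcases eq_or_lt_of_le (unitInterval.le_one' : rcInv σ s ≤ 1) with hr1 | hr1
    · have hevc : (fun u => F (rcInv σ u)) =ᶠ[nhdsWithin s (Ioi s)]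
          (fun _ => F (rcInv σ s)) := by
        refine Eventually.mono self_mem_nhdsWithin fun u hu => ?_
        have h2 : rcInv σ s ≤ rcInv σ u := rcInv_mono (le_of_lt hu)
        have h3 : rcInv σ u = rcInv σ s := by
          rw [hr1] at h2 ⊢
          exact le_antisymm unitInterval.le_one' h2
        show F (rcInv σ u) = F (rcInv σ s)
        rw [h3]
      exact Filter.Tendsto.congr' hevc.symm tendsto_const_nhds
    · have hFt : Tendsto F (nhdsWithin (rcInv σ s) (Ici (rcInv σ s)))
          (nhds (F (rcInv σ s))) := by
        have hIci : Ici (rcInv σ s) = {rcInv σ s} ∪ Ioi (rcInv σ s) := by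
          ext u
          simp only [mem_Ici, mem_union, mem_singleton_iff, mem_Ioi]
          constructor
          · intro h; rcases eq_or_lt_of_le h with h' | h'
            · exact Or.inl h'.symm
            · exact Or.inr h'
          · rintro (rfl | h'); exacts [le_refl _, le_of_lt h']
        rw [hIci, nhdsWithin_union, nhdsWithin_singleton]
        exact Filter.tendsto_sup.2 ⟨tendsto_pure_nhds _ _, hF.1 _ (lt_one_iff.1 hr1)⟩
      refine hFt.comp ?_
      rw [tendsto_nhdsWithin_iff]
      refine ⟨rcInv_right_tendsto hcont hmono h0 h1 hs', ?_⟩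
      exact Eventually.mono self_mem_nhdsWithin fun u hu => rcInv_mono (le_of_lt hu)
  · intro s hs
    set L := sSup (rcInv σ '' Iio s) with hLdef
    have htL : Tendsto (rcInv σ) (nhdsWithin s (Iio s)) (nhds L) :=
      MonotoneOn.tendsto_nhdsLT (f := rcInv σ) (x := s)
        (rcInv_mono.monotoneOn (Iio s)) (OrderTop.bddAbove _)
    by_cases hcase : ∃ s0 ∈ Iio s, rcInv σ s0 = L
    · obtain ⟨s0, hs0, hL0⟩ := hcase
      refine ⟨F L, ?_⟩
      have hevc : (fun u => F (rcInv σ u)) =ᶠ[nhdsWithin s (Iio s)] (fun _ => F L) := by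
        have hmem : Ioo s0 s ∈ nhdsWithin s (Iio s) :=
          Ioo_mem_nhdsLT_of_mem ⟨hs0, le_refl s⟩
        filter_upwards [hmem] with u hu
        have hA : rcInv σ u ≤ L := le_sSup (mem_image_of_mem _ hu.2)
        have hB : L ≤ rcInv σ u := by
          rw [← hL0]; exact rcInv_mono (le_of_lt hu.1)
        show F (rcInv σ u) = F L
        rw [le_antisymm hA hB]
      exact Filter.Tendsto.congr' hevc.symm tendsto_const_nhds
    · push_neg at hcase
      have hlt : ∀ s0 ∈ Iio s, rcInv σ s0 < L := fun s0 h =>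
        lt_of_le_of_ne (le_sSup (mem_image_of_mem _ h)) (hcase s0 h)
      have h0s : (0:unitInterval) < s := pos_iff.2 hs
      have hLpos : 0 < (L:ℝ) := by
        have h2 := hlt 0 h0s
        exact pos_iff.1 (lt_of_le_of_lt unitInterval.nonneg' h2)
      obtain ⟨l, hl⟩ := hF.2 L hLpos
      refine ⟨l, hl.comp ?_⟩
      rw [tendsto_nhdsWithin_iff]
      exact ⟨htL, Eventually.mono self_mem_nhdsWithin fun u hu => hlt u hu⟩

lemma countable_multi_preimage (hcont : Continuous σ) (hmono : Monotone σ)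
    (h0 : σ 0 = 0) (h1 : σ 1 = 1) :
    {s : unitInterval | ∃ t u, t ≠ u ∧ σ t = s ∧ σ u = s}.Countable := by
  have hsub : {s : unitInterval | ∃ t u, t ≠ u ∧ σ t = s ∧ σ u = s} ⊆
      insert 0 {s | ¬ContinuousAt (rcInv σ) s} := by
    rintro s ⟨t, u, htu, ht, hu⟩
    by_cases hs0 : s = 0
    · exact Or.inl hs0
    right
    obtain ⟨a, b, hab, ha, hb⟩ : ∃ a b, a < b ∧ σ a = s ∧ σ b = s := by
      rcases lt_or_gt_of_ne htu with h | h
      exacts [⟨t, u, h, ht, hu⟩, ⟨u, t, h, hu, ht⟩]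
    intro hcontAt
    have hspos : 0 < s := lt_of_le_of_ne unitInterval.nonneg' (Ne.symm hs0)
    have hne : (nhdsWithin s (Iio s)).NeBot := nhdsWithin_Iio_self_neBot' ⟨0, hspos⟩
    have hev : ∀ᶠ s' in nhdsWithin s (Iio s), rcInv σ s' ≤ a := by
      refine Eventually.mono self_mem_nhdsWithin fun s' hs' => ?_
      by_contra hgt
      push_neg at hgt
      have h2 : s ≤ s' := by
        have h3 := hmono (le_of_lt hgt)
        rwa [ha, sigma_rcInv hcont h0 h1] at h3
      exact absurd hs' (not_lt.2 h2)
    have hle : rcInv σ s ≤ a :=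
      le_of_tendsto (hcontAt.mono_left nhdsWithin_le_nhds) hev
    have hge : b ≤ rcInv σ s := le_rcInv (le_of_eq hb)
    exact absurd (lt_of_lt_of_le hab (le_trans hge hle)) (lt_irrefl a)
  exact Set.Countable.mono hsub
    ((Monotone.countable_not_continuousAt rcInv_mono).insert 0)

end RcInv

lemma lim_of_geom (a : ℕ → ℝ) (h : ∀ m, |a m - a (m+1)| ≤ (1/2:ℝ)^m) :
    ∃ L, Tendsto a atTop (nhds L) ∧ ∀ m, |a m - L| ≤ 2 * (1/2:ℝ)^m := by
  have hcau : CauchySeq a := by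
    refine cauchySeq_of_le_geometric (1/2) 1 (by norm_num) (fun n => ?_)
    rw [Real.dist_eq, one_mul]
    exact h n
  obtain ⟨L, hL⟩ := cauchySeq_tendsto_of_complete hcau
  refine ⟨L, hL, fun m => ?_⟩
  have hstep : ∀ k, |a m - a (k + m)| ≤ 2 * (1/2:ℝ)^m - 2 * (1/2:ℝ)^(k + m) := by
    intro k
    induction k with
    | zero => simp
    | succ k ih =>
      have h2 := h (k + m)
      have e : a m - a (k + 1 + m) = (a m - a (k + m)) + (a (k+m) - a ((k+m)+1)) := by
        have : k + 1 + m = (k + m) + 1 := by omega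
        rw [this]; ring
      rw [e]
      have h3 := abs_add_le (a m - a (k + m)) (a (k+m) - a ((k+m)+1))
      have e2 : (2:ℝ) * (1/2:ℝ)^(k+1+m) = (1/2:ℝ)^(k+m) := by
        have : k + 1 + m = (k + m) + 1 := by omega
        rw [this, pow_succ]; ring
      rw [e2]
      linarith
  have htt : Tendsto (fun k => a (k + m)) atTop (nhds L) :=
    hL.comp (tendsto_add_atTop_nat m)
  have habs : Tendsto (fun k => |a m - a (k + m)|) atTop (nhds (|a m - L|)) :=
    (tendsto_const_nhds.sub htt).abs
  refine le_of_tendsto habs (Filter.Eventually.of_forall fun k => ?_)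
  have := hstep k
  have hpos : (0:ℝ) ≤ 2 * (1/2:ℝ)^(k+m) := by positivity
  linarith

lemma lim_of_geom_I (a : ℕ → unitInterval) (h : ∀ m, |(a m : ℝ) - (a (m+1) : ℝ)| ≤ (1/2:ℝ)^m) :
    ∃ L : unitInterval, Tendsto (fun m => (a m : ℝ)) atTop (nhds (L:ℝ)) ∧
      ∀ m, |(a m : ℝ) - (L:ℝ)| ≤ 2 * (1/2:ℝ)^m := by
  obtain ⟨L, hL, hb⟩ := lim_of_geom (fun m => (a m : ℝ)) h
  have h0 : 0 ≤ L := le_of_tendsto_of_tendsto' tendsto_const_nhds hL (fun m => (a m).2.1)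
  have h1 : L ≤ 1 := le_of_tendsto_of_tendsto' hL tendsto_const_nhds (fun m => (a m).2.2)
  exact ⟨⟨L, h0, h1⟩, hL, hb⟩

lemma tendsto_two_halves : Tendsto (fun m : ℕ => 2*(1/2:ℝ)^m) atTop (nhds 0) := by
  have h := tendsto_pow_atTop_nhds_zero_of_lt_one (by norm_num : (0:ℝ) ≤ 1/2)
    (by norm_num : (1/2:ℝ) < 1)
  have := h.const_mul 2
  simpa using this

lemma exists_half_pow_lt_aux (c : ℝ) {ε : ℝ} (hε : 0 < ε) : ∃ k : ℕ, c * (1/2:ℝ)^k < ε := by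
  have h := tendsto_pow_atTop_nhds_zero_of_lt_one (by norm_num : (0:ℝ) ≤ 1/2)
    (by norm_num : (1/2:ℝ) < 1)
  have h2 := h.const_mul c
  rw [mul_zero] at h2
  have h3 := Metric.tendsto_nhds.1 h2 ε hε
  obtain ⟨k, hk⟩ := h3.exists
  rw [Real.dist_eq, sub_zero] at hk
  exact ⟨k, lt_of_le_of_lt (le_abs_self _) hk⟩

theorem cauchy_pointwise_limit (f : ℕ → unitInterval → ℝ)
    (hf : ∀ n, Cadlag (f n))
    (hCauchy : ∀ ε : ℝ, 0 < ε → ∃ N : ℕ, ∀ m ≥ N, ∀ n ≥ N,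
      skorokhodDist (f m) (f n) < ε) :
    ∃ g : unitInterval → ℝ, Cadlag g ∧
      ∃ N : Set unitInterval, N.Countable ∧ (∀ s ∈ N, (s : ℝ) < 1) ∧
        ∀ s : unitInterval, s ∉ N →
          Filter.Tendsto (fun n => f n s) Filter.atTop (nhds (g s)) := by
  choose C hC using fun n => (hf n).bounded
  have hsel : ∀ k : ℕ, ∃ N : ℕ, ∀ m ≥ N, ∀ n ≥ N,
      skorokhodDist (f m) (f n) < (1/2:ℝ)^k := fun k => hCauchy _ (by positivity)
  choose N0 hN0 using hsel
  let nseq : ℕ → ℕ := fun k =>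
    Nat.rec (motive := fun _ => ℕ) (N0 0) (fun k ih => max ih (N0 (k+1))) k
  have hnseq_mono : ∀ k, nseq k ≤ nseq (k+1) := fun k => le_max_left _ _
  have hnseq_ge : ∀ k, N0 k ≤ nseq k := by
    intro k
    cases k with
    | zero => exact le_refl _
    | succ k => exact le_max_right _ _
  have hd : ∀ k, ∀ n, nseq k ≤ n →
      skorokhodDist (f (nseq k)) (f n) < (1/2:ℝ)^k := fun k n hn =>
    hN0 k _ (hnseq_ge k) n (le_trans (hnseq_ge k) hn)
  set y : ℕ → unitInterval → ℝ := fun k => f (nseq k) with hy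
  have hlamex : ∀ k, ∃ γ, IsIncHomeo γ ∧ (∀ t, |y k t - y (k+1) (γ t)| ≤ (1/2:ℝ)^k) ∧
      (∀ t : unitInterval, |(t:ℝ) - (γ t : ℝ)| ≤ (1/2:ℝ)^k) :=
    fun k => skorokhod_extract (hC (nseq k)) (hC (nseq (k+1))) (hd k _ (hnseq_mono k))
  choose lam hlam_homeo hlam_val hlam_t using hlamex
  let Phi : ℕ → unitInterval → unitInterval := fun m =>
    Nat.rec (motive := fun _ => unitInterval → unitInterval) id (fun m ih => lam m ∘ ih) m
  have hPhiS : ∀ m, Phi (m+1) = lam m ∘ Phi m := fun m => rfl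
  have hPhi_homeo : ∀ m, IsIncHomeo (Phi m) := by
    intro m
    induction m with
    | zero => exact incHomeo_id
    | succ m ih => exact (hlam_homeo m).comp' ih
  have hval : ∀ t m, |y m (Phi m t) - y (m+1) (Phi (m+1) t)| ≤ (1/2:ℝ)^m := by
    intro t m
    rw [hPhiS m]
    exact hlam_val m (Phi m t)
  have hFex : ∀ t, ∃ L, Tendsto (fun m => y m (Phi m t)) atTop (nhds L) ∧
      ∀ m, |y m (Phi m t) - L| ≤ 2 * (1/2:ℝ)^m := fun t => lim_of_geom _ (hval t)
  choose F hFtend hFbound using hFex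
  have htchain : ∀ t m, |((Phi m t : ℝ)) - ((Phi (m+1) t : ℝ))| ≤ (1/2:ℝ)^m := by
    intro t m
    rw [hPhiS m]
    exact hlam_t m (Phi m t)
  have hsigex : ∀ t, ∃ L : unitInterval,
      Tendsto (fun m => ((Phi m t : ℝ))) atTop (nhds (L:ℝ)) ∧
      ∀ m, |((Phi m t : ℝ)) - (L:ℝ)| ≤ 2 * (1/2:ℝ)^m :=
    fun t => lim_of_geom_I _ (htchain t)
  choose sig hsigtend hsigbound using hsigex
  have hsig_mono : Monotone sig := by
    intro a b hab
    rw [← Subtype.coe_le_coe]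
    exact le_of_tendsto_of_tendsto' (hsigtend a) (hsigtend b)
      (fun m => Subtype.coe_le_coe.2 ((hPhi_homeo m).2.1.monotone hab))
  have hsig0 : sig 0 = 0 := by
    have hz : ∀ m, Phi m 0 = 0 := fun m => (hPhi_homeo m).map_zero
    have h2 := hsigtend 0
    simp only [hz] at h2
    exact Subtype.ext (tendsto_nhds_unique h2 tendsto_const_nhds)
  have hsig1 : sig 1 = 1 := by
    have hz : ∀ m, Phi m 1 = 1 := fun m => (hPhi_homeo m).map_one
    have h2 := hsigtend 1
    simp only [hz] at h2
    exact Subtype.ext (tendsto_nhds_unique h2 tendsto_const_nhds)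
  have hhalf_ev : ∀ ε : ℝ, 0 < ε → ∀ᶠ m in atTop, 2*(1/2:ℝ)^m < ε := by
    intro ε hε
    filter_upwards [Metric.tendsto_nhds.1 tendsto_two_halves ε hε] with m hm
    rw [Real.dist_eq, sub_zero] at hm
    exact lt_of_le_of_lt (le_abs_self _) hm
  have hsig_cont : Continuous sig := by
    have hTU : TendstoUniformly (fun m t => Phi m t) sig atTop := by
      rw [Metric.tendstoUniformly_iff]
      intro ε hε
      filter_upwards [hhalf_ev ε hε] with m hm t
      rw [Subtype.dist_eq, Real.dist_eq, abs_sub_comm]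
      exact lt_of_le_of_lt (hsigbound t m) hm
    exact hTU.continuous (Filter.Eventually.of_forall fun m => (hPhi_homeo m).1).frequently
  have hG_cadlag : ∀ m, Cadlag (fun t => y m (Phi m t)) :=
    fun m => (hf _).comp_homeo (hPhi_homeo m)
  have hF_cadlag : Cadlag F := by
    refine cadlag_of_unif (fun m t => y m (Phi m t)) F (fun m => 2*(1/2:ℝ)^m)
      hG_cadlag tendsto_two_halves (fun m t => hFbound t m)
  set g : unitInterval → ℝ := fun s => F (rcInv sig s) with hg
  have hg_cadlag : Cadlag g :=
    cadlag_comp_rcInv hF_cadlag hsig_cont hsig_mono hsig0 hsig1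
  set N1 : Set unitInterval := {s | ∃ t u, t ≠ u ∧ sig t = s ∧ sig u = s} with hN1
  set DF : Set unitInterval := {t | ¬ContinuousAt F t} with hDF
  set N2 : Set unitInterval := rcInv sig ⁻¹' DF with hN2
  set NN : Set unitInterval := insert 0 ((N1 ∪ N2) \ {1}) with hNN
  have hcount : NN.Countable := by
    refine Set.Countable.insert 0 (Set.Countable.mono diff_subset ?_)
    refine Set.Countable.union ?_ ?_
    · exact countable_multi_preimage hsig_cont hsig_mono hsig0 hsig1
    · exact (cadlag_countable_discont hF_cadlag).preimage
        (rcInv_injective hsig_cont hsig0 hsig1)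
  have hlt1 : ∀ s ∈ NN, (s:ℝ) < 1 := by
    intro s hs
    rcases hs with rfl | ⟨-, hne⟩
    · norm_num
    · refine lt_of_le_of_ne s.2.2 (fun h => hne ?_)
      simp only [mem_singleton_iff]
      exact Subtype.ext (by rw [h, Set.Icc.coe_one])
  have hgam : ∀ k n, nseq k ≤ n → ∃ γ, IsIncHomeo γ ∧
      (∀ t, |y k t - f n (γ t)| ≤ (1/2:ℝ)^k) ∧
      (∀ t : unitInterval, |(t:ℝ) - (γ t : ℝ)| ≤ (1/2:ℝ)^k) :=
    fun k n hn => skorokhod_extract (hC _) (hC n) (hd k n hn)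
  refine ⟨g, hg_cadlag, NN, hcount, hlt1, ?_⟩
  intro s hsN
  rw [Metric.tendsto_atTop]
  intro ε hε
  by_cases hs1 : s = 1
  · subst hs1
    obtain ⟨k, hk⟩ := exists_half_pow_lt_aux 3 hε
    refine ⟨nseq k, fun n hn => ?_⟩
    obtain ⟨γ, hγ, hγv, hγt⟩ := hgam k n hn
    have h1 : |y k 1 - f n 1| ≤ (1/2:ℝ)^k := by
      have := hγv 1
      rwa [hγ.map_one] at this
    have h2 : |y k 1 - F 1| ≤ 2*(1/2:ℝ)^k := by
      have := hFbound 1 k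
      rwa [(hPhi_homeo k).map_one] at this
    have h3 : g 1 = F 1 := by
      show F (rcInv sig 1) = F 1
      rw [rcInv_one]
    rw [Real.dist_eq, h3]
    have e : f n 1 - F 1 = -(y k 1 - f n 1) + (y k 1 - F 1) := by ring
    rw [e]
    have h4 := abs_add_le (-(y k 1 - f n 1)) (y k 1 - F 1)
    rw [abs_neg] at h4
    linarith
  · have hsdiff : s ∉ (N1 ∪ N2) \ ({1} : Set unitInterval) := fun h =>
      hsN (mem_insert_of_mem _ h)
    have hs_ne1 : s ∉ ({1} : Set unitInterval) := by
      intro h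
      exact hs1 (by simpa using h)
    have hsN12 : s ∉ N1 ∧ s ∉ N2 := by
      constructor <;> intro h <;> exact hsdiff ⟨by simp [h], hs_ne1⟩
    set t' := rcInv sig s with ht'
    have hsig_t' : sig t' = s := sigma_rcInv hsig_cont hsig0 hsig1 s
    have huniq : ∀ t, sig t = s → t = t' := by
      intro t ht
      by_contra hne
      exact hsN12.1 ⟨t, t', hne, ht, hsig_t'⟩
    have hFc : ContinuousAt F t' := by
      by_contra h
      exact hsN12.2 h
    obtain ⟨δ, hδpos, hδ⟩ : ∃ δ > 0, ∀ u : unitInterval,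
        |(u:ℝ) - (t':ℝ)| ≤ δ → |F u - F t'| ≤ ε/2 := by
      obtain ⟨δ', hδ'pos, hδ'⟩ := Metric.continuousAt_iff.1 hFc (ε/2) (by linarith)
      refine ⟨δ'/2, by linarith, fun u hu => ?_⟩
      have hdu : dist u t' < δ' := by
        rw [Subtype.dist_eq, Real.dist_eq]
        linarith
      have := hδ' hdu
      rw [Real.dist_eq] at this
      linarith
    obtain ⟨η, hηpos, hη⟩ : ∃ η > 0, ∀ t : unitInterval,
        |(sig t : ℝ) - (s:ℝ)| ≤ η → |(t:ℝ) - (t':ℝ)| ≤ δ := by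
      have hlow : ∃ η1 > 0, ∀ t : unitInterval,
          |(sig t : ℝ) - (s:ℝ)| ≤ η1 → (t':ℝ) - δ ≤ (t:ℝ) := by
        by_cases hcase : 0 ≤ (t':ℝ) - δ
        · set a : unitInterval := ⟨(t':ℝ) - δ, ⟨hcase, by linarith [t'.2.2]⟩⟩ with ha
          have haneq : a ≠ t' := by
            intro h
            have h2 : (a:ℝ) = (t':ℝ) := congrArg _ h
            rw [ha] at h2
            simp at h2
            linarith
          have hale : a ≤ t' := by
            rw [← Subtype.coe_le_coe, ha]
            simp only []
            linarith
          have halt : (sig a : ℝ) < (s:ℝ) := by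
            have h1 : sig a ≤ sig t' := hsig_mono hale
            rw [hsig_t'] at h1
            rcases eq_or_lt_of_le h1 with h2 | h2
            · exact absurd (huniq a h2) haneq
            · exact Subtype.coe_lt_coe.2 h2
          refine ⟨((s:ℝ) - (sig a : ℝ))/2, by linarith, fun t ht => ?_⟩
          by_contra hlt
          push_neg at hlt
          have h3 : sig t ≤ sig a := by
            refine hsig_mono ?_
            rw [← Subtype.coe_le_coe]
            have : (a:ℝ) = (t':ℝ) - δ := by rw [ha]
            rw [this]
            linarith
          have h4 : (sig t : ℝ) ≤ (sig a : ℝ) := Subtype.coe_le_coe.2 h3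
          have h5 : (s:ℝ) - ((s:ℝ) - (sig a:ℝ))/2 ≤ (sig t : ℝ) := by
            have := abs_le.1 ht
            linarith [this.1]
          linarith
        · refine ⟨1, one_pos, fun t _ => ?_⟩
          push_neg at hcase
          linarith [t.2.1]
      have hhigh : ∃ η2 > 0, ∀ t : unitInterval,
          |(sig t : ℝ) - (s:ℝ)| ≤ η2 → (t:ℝ) ≤ (t':ℝ) + δ := by
        by_cases hcase : (t':ℝ) + δ ≤ 1
        · set b : unitInterval := ⟨(t':ℝ) + δ, ⟨by linarith [t'.2.1], hcase⟩⟩ with hb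
          have hbneq : b ≠ t' := by
            intro h
            have h2 : (b:ℝ) = (t':ℝ) := congrArg _ h
            rw [hb] at h2
            simp at h2
            linarith
          have hble : t' ≤ b := by
            rw [← Subtype.coe_le_coe, hb]
            simp only []
            linarith
          have hblt : (s:ℝ) < (sig b : ℝ) := by
            have h1 : sig t' ≤ sig b := hsig_mono hble
            rw [hsig_t'] at h1
            rcases eq_or_lt_of_le h1 with h2 | h2
            · exact absurd (huniq b h2.symm) hbneq
            · exact Subtype.coe_lt_coe.2 h2
          refine ⟨((sig b : ℝ) - (s:ℝ))/2, by linarith, fun t ht => ?_⟩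
          by_contra hlt
          push_neg at hlt
          have h3 : sig b ≤ sig t := by
            refine hsig_mono ?_
            rw [← Subtype.coe_le_coe]
            have : (b:ℝ) = (t':ℝ) + δ := by rw [hb]
            rw [this]
            linarith
          have h4 : (sig b : ℝ) ≤ (sig t : ℝ) := Subtype.coe_le_coe.2 h3
          have h5 : (sig t : ℝ) ≤ (s:ℝ) + ((sig b:ℝ) - (s:ℝ))/2 := by
            have := abs_le.1 ht
            linarith [this.2]
          linarith
        · refine ⟨1, one_pos, fun t _ => ?_⟩
          push_neg at hcase
          linarith [t.2.2]
      obtain ⟨η1, hη1pos, hη1⟩ := hlow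
      obtain ⟨η2, hη2pos, hη2⟩ := hhigh
      refine ⟨min η1 η2, lt_min hη1pos hη2pos, fun t ht => ?_⟩
      have ht1 := hη1 t (le_trans ht (min_le_left _ _))
      have ht2 := hη2 t (le_trans ht (min_le_right _ _))
      rw [abs_le]
      constructor <;> linarith
    obtain ⟨k1, hk1⟩ := exists_half_pow_lt_aux 3 hηpos
    obtain ⟨k2, hk2⟩ := exists_half_pow_lt_aux 3 (show (0:ℝ) < ε/2 by linarith)
    set k := max k1 k2 with hkdef
    have hmono_pow : ∀ j j' : ℕ, j ≤ j' → ((1:ℝ)/2)^j' ≤ (1/2:ℝ)^j := fun j j' h =>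
      pow_le_pow_of_le_one (by norm_num) (by norm_num) h
    have hkη : 3*(1/2:ℝ)^k ≤ η :=
      le_of_lt (lt_of_le_of_lt (by
        have := hmono_pow k1 k (le_max_left _ _)
        linarith) hk1)
    have hkε : 3*(1/2:ℝ)^k < ε/2 :=
      lt_of_le_of_lt (by
        have := hmono_pow k2 k (le_max_right _ _)
        linarith) hk2
    refine ⟨nseq k, fun n hn => ?_⟩
    obtain ⟨γ, hγ, hγv, hγt⟩ := hgam k n hn
    set u := Function.surjInv hγ.2.2.2 s with hu
    have hγu : γ u = s := Function.surjInv_eq _ s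
    set tn := Function.surjInv (hPhi_homeo k).2.2.2 u with htn
    have hPtn : Phi k tn = u := Function.surjInv_eq _ u
    have e1 : |y k u - f n s| ≤ (1/2:ℝ)^k := by
      have := hγv u
      rwa [hγu] at this
    have e2 : |y k u - F tn| ≤ 2*(1/2:ℝ)^k := by
      have := hFbound tn k
      rwa [hPtn] at this
    have e3 : |(u:ℝ) - (s:ℝ)| ≤ (1/2:ℝ)^k := by
      have := hγt u
      rwa [hγu] at this
    have e4 : |(sig tn : ℝ) - (u:ℝ)| ≤ 2*(1/2:ℝ)^k := by
      have := hsigbound tn k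
      rw [hPtn] at this
      rwa [abs_sub_comm] at this
    have e5 : |(sig tn : ℝ) - (s:ℝ)| ≤ η := by
      have e' : (sig tn : ℝ) - (s:ℝ) = ((sig tn : ℝ) - (u:ℝ)) + ((u:ℝ) - (s:ℝ)) := by ring
      have h6 := abs_add_le ((sig tn : ℝ) - (u:ℝ)) ((u:ℝ) - (s:ℝ))
      rw [← e'] at h6
      linarith
    have e6 : |(tn:ℝ) - (t':ℝ)| ≤ δ := hη tn e5
    have e7 : |F tn - F t'| ≤ ε/2 := hδ tn e6
    rw [Real.dist_eq]
    have hgs : g s = F t' := rfl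
    rw [hgs]
    have e : f n s - F t' = -(y k u - f n s) + ((y k u - F tn) + (F tn - F t')) := by ring
    rw [e]
    have h7 := abs_add_le (-(y k u - f n s)) ((y k u - F tn) + (F tn - F t'))
    have h8 := abs_add_le (y k u - F tn) (F tn - F t')
    rw [abs_neg] at h7
    linarith
end

section
/- If F₁^{σ₁}, F₂^{σ₂} ∈ D⁺ satisfy ρ⁺(F₁^{σ₁}, F₂^{σ₂}) = 0, then F₁ ∘ σ₁⁻¹ = F₂ ∘ σ₂⁻¹ on [0,1], where σᵢ⁻¹ denote the right-continuous inverses. -/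
open Filter

/-! ### Auxiliary lemmas -/

lemma Cadlag.bounded_s19 {f : unitInterval → ℝ} (hf : Cadlag f) : ∃ M, ∀ t, |f t| ≤ M := by
  have key : ∀ t : unitInterval, ∃ M : ℝ, ∀ᶠ u in nhds t, |f u| ≤ M := by
    intro t
    have hr : ∃ Mr : ℝ, ∀ᶠ u in nhdsWithin t (Set.Ioi t), |f u| ≤ Mr := by
      by_cases ht : (t : ℝ) < 1
      · refine ⟨|f t| + 1, ?_⟩
        have h1 : ∀ᶠ u in nhdsWithin t (Set.Ioi t), dist (f u) (f t) < 1 :=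
          (Metric.tendsto_nhds.mp (hf.1 t ht)) 1 one_pos
        filter_upwards [h1] with u hu
        rw [Real.dist_eq] at hu
        calc |f u| = |f u - f t + f t| := by ring_nf
          _ ≤ |f u - f t| + |f t| := abs_add_le _ _
          _ ≤ |f t| + 1 := by linarith
      · have hempty : Set.Ioi t = (∅ : Set unitInterval) := by
          ext u
          simp only [Set.mem_Ioi, Set.mem_empty_iff_false, iff_false, not_lt]
          have hu : (u : ℝ) ≤ 1 := u.2.2
          have ht' : (1 : ℝ) ≤ (t : ℝ) := not_lt.mp ht
          exact Subtype.coe_le_coe.mp (by exact_mod_cast hu.trans ht')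
        refine ⟨0, ?_⟩
        rw [hempty, nhdsWithin_empty]
        exact Filter.eventually_bot
    have hl : ∃ Ml : ℝ, ∀ᶠ u in nhdsWithin t (Set.Iio t), |f u| ≤ Ml := by
      by_cases ht : 0 < (t : ℝ)
      · obtain ⟨l, hlim⟩ := hf.2 t ht
        refine ⟨|l| + 1, ?_⟩
        have h1 : ∀ᶠ u in nhdsWithin t (Set.Iio t), dist (f u) l < 1 :=
          (Metric.tendsto_nhds.mp hlim) 1 one_pos
        filter_upwards [h1] with u hu
        rw [Real.dist_eq] at hu
        calc |f u| = |f u - l + l| := by ring_nf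
          _ ≤ |f u - l| + |l| := abs_add_le _ _
          _ ≤ |l| + 1 := by linarith
      · have hempty : Set.Iio t = (∅ : Set unitInterval) := by
          ext u
          simp only [Set.mem_Iio, Set.mem_empty_iff_false, iff_false, not_lt]
          have hu : (0 : ℝ) ≤ (u : ℝ) := u.2.1
          have ht' : (t : ℝ) ≤ 0 := not_lt.mp ht
          exact Subtype.coe_le_coe.mp (by exact_mod_cast ht'.trans hu)
        refine ⟨0, ?_⟩
        rw [hempty, nhdsWithin_empty]
        exact Filter.eventually_bot
    obtain ⟨Mr, hMr⟩ := hr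
    obtain ⟨Ml, hMl⟩ := hl
    refine ⟨max (max Ml Mr) |f t|, ?_⟩
    have hdecomp : nhds t =
        nhdsWithin t (Set.Iio t) ⊔ (nhdsWithin t (Set.Ioi t) ⊔ nhdsWithin t {t}) := by
      rw [nhdsGT_sup_nhdsWithin_singleton, nhdsLT_sup_nhdsGE]
    rw [hdecomp, Filter.eventually_sup, Filter.eventually_sup]
    refine ⟨?_, ?_, ?_⟩
    · filter_upwards [hMl] with u hu
      exact hu.trans (le_max_of_le_left (le_max_left _ _))
    · filter_upwards [hMr] with u hu
      exact hu.trans (le_max_of_le_left (le_max_right _ _))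
    · rw [nhdsWithin_singleton, Filter.eventually_pure]
      exact le_max_right _ _
  choose M hM using key
  set U : unitInterval → Set unitInterval := fun t => {u | |f u| ≤ M t} with hU_def
  obtain ⟨T, -, hT⟩ := isCompact_univ.elim_nhds_subcover U (fun t _ => hM t)
  rcases T.eq_empty_or_nonempty with hTe | hTe
  · exfalso
    have := hT (Set.mem_univ (0 : unitInterval))
    simp [hTe] at this
  · refine ⟨T.sup' hTe M, fun u => ?_⟩
    have := hT (Set.mem_univ u)
    simp only [Set.mem_iUnion] at this
    obtain ⟨x, hx, hxu⟩ := this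
    exact le_trans hxu (Finset.le_sup' M hx)

lemma InSigma.apply_zero {σ : unitInterval → unitInterval} (hσ : InSigma σ) : σ 0 = 0 := by
  obtain ⟨u, hu⟩ := hσ.2.2 0
  have h0u : (0 : unitInterval) ≤ u := by exact_mod_cast u.2.1
  have := hσ.2.1 h0u
  rw [hu] at this
  exact le_antisymm this (by exact_mod_cast (σ 0).2.1)

lemma InSigma.apply_one {σ : unitInterval → unitInterval} (hσ : InSigma σ) : σ 1 = 1 := by
  obtain ⟨u, hu⟩ := hσ.2.2 1
  have h1u : u ≤ (1 : unitInterval) := by exact_mod_cast u.2.2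
  have := hσ.2.1 h1u
  rw [hu] at this
  exact le_antisymm (by exact_mod_cast (σ 1).2.2) this

lemma rcInv_mem {σ : unitInterval → unitInterval} (hσ : InSigma σ) (s : unitInterval) :
    σ (rcInv σ s) ≤ s := by
  have hclosed : IsClosed {t : unitInterval | σ t ≤ s} := by
    have : {t : unitInterval | σ t ≤ s} = σ ⁻¹' Set.Iic s := rfl
    rw [this]
    exact isClosed_Iic.preimage hσ.1
  have hne : {t : unitInterval | σ t ≤ s}.Nonempty := by
    refine ⟨0, ?_⟩
    simp only [Set.mem_setOf_eq, hσ.apply_zero]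
    exact_mod_cast s.2.1
  exact (hclosed.isCompact.sSup_mem hne : rcInv σ s ∈ _)

lemma rcInv_apply {σ : unitInterval → unitInterval} (hσ : InSigma σ) (s : unitInterval) :
    σ (rcInv σ s) = s := by
  obtain ⟨u, hu⟩ := hσ.2.2 s
  have hu_mem : u ∈ {t : unitInterval | σ t ≤ s} := le_of_eq hu
  have h1 : u ≤ rcInv σ s := @le_sSup unitInterval _ {t : unitInterval | σ t ≤ s} u hu_mem
  have h2 : σ u ≤ σ (rcInv σ s) := hσ.2.1 h1
  rw [hu] at h2
  exact le_antisymm (rcInv_mem hσ s) h2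

lemma lt_of_rcInv_lt {σ : unitInterval → unitInterval} (hσ : InSigma σ) {s t : unitInterval}
    (h : rcInv σ s < t) : s < σ t := by
  by_contra hc
  push_neg at hc
  exact absurd (@le_sSup unitInterval _ {t : unitInterval | σ t ≤ s} t hc) (not_le.mpr h)

lemma IsIncHomeo.apply_one {γ : unitInterval → unitInterval} (hγ : IsIncHomeo γ) :
    γ 1 = 1 := by
  obtain ⟨u, hu⟩ := hγ.2.2.2 1
  have h1u : u ≤ (1 : unitInterval) := by exact_mod_cast u.2.2
  have := hγ.2.1.monotone h1u
  rw [hu] at this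
  exact le_antisymm (by exact_mod_cast (γ 1).2.2) this

lemma extract_gamma {F₁ F₂ : unitInterval → ℝ} {σ₁ σ₂ : unitInterval → unitInterval}
    (hF₁ : Cadlag F₁) (hF₂ : Cadlag F₂)
    (h : rhoPlus (F₁, σ₁) (F₂, σ₂) = 0) {ε : ℝ} (hε : 0 < ε) :
    ∃ γ : unitInterval → unitInterval, IsIncHomeo γ ∧
      (∀ t, |F₁ (γ t) - F₂ t| < ε) ∧ (∀ t, |(σ₁ (γ t) : ℝ) - (σ₂ t : ℝ)| < ε) := by
  obtain ⟨M₁, hM₁⟩ := hF₁.bounded_s19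
  obtain ⟨M₂, hM₂⟩ := hF₂.bounded_s19
  set A := { c : ℝ | ∃ γ : unitInterval → unitInterval, IsIncHomeo γ ∧
    (⨆ t : unitInterval, |F₁ (γ t) - F₂ t|) +
    (⨆ t : unitInterval, |(σ₁ (γ t) : ℝ) - (σ₂ t : ℝ)|) = c } with hA_def
  have hAne : A.Nonempty :=
    ⟨_, id, ⟨continuous_id, strictMono_id, Function.bijective_id⟩, rfl⟩
  have hAbdd : BddBelow A := by
    refine ⟨0, fun c hc => ?_⟩
    obtain ⟨γ, -, hc⟩ := hc
    rw [← hc]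
    exact add_nonneg (Real.iSup_nonneg fun t => abs_nonneg _)
      (Real.iSup_nonneg fun t => abs_nonneg _)
  have hInf : sInf A < ε := by
    have : rhoPlus (F₁, σ₁) (F₂, σ₂) = sInf A := rfl
    rw [← this, h]; exact hε
  obtain ⟨c, hcA, hcε⟩ := (csInf_lt_iff hAbdd hAne).mp hInf
  obtain ⟨γ, hγ, hc⟩ := hcA
  set S1 := ⨆ t : unitInterval, |F₁ (γ t) - F₂ t| with hS1
  set S2 := ⨆ t : unitInterval, |(σ₁ (γ t) : ℝ) - (σ₂ t : ℝ)| with hS2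
  have hS1_nonneg : 0 ≤ S1 := Real.iSup_nonneg fun t => abs_nonneg _
  have hS2_nonneg : 0 ≤ S2 := Real.iSup_nonneg fun t => abs_nonneg _
  have hbd1 : BddAbove (Set.range fun t : unitInterval => |F₁ (γ t) - F₂ t|) := by
    refine ⟨M₁ + M₂, ?_⟩
    rintro x ⟨t, rfl⟩
    calc |F₁ (γ t) - F₂ t| ≤ |F₁ (γ t)| + |F₂ t| := abs_sub _ _
      _ ≤ M₁ + M₂ := add_le_add (hM₁ _) (hM₂ _)
  have hbd2 : BddAbove (Set.range fun t : unitInterval =>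
      |(σ₁ (γ t) : ℝ) - (σ₂ t : ℝ)|) := by
    refine ⟨2, ?_⟩
    rintro x ⟨t, rfl⟩
    have h1 : |(σ₁ (γ t) : ℝ)| ≤ 1 := abs_le.mpr ⟨by linarith [(σ₁ (γ t)).2.1], (σ₁ (γ t)).2.2⟩
    have h2 : |(σ₂ t : ℝ)| ≤ 1 := abs_le.mpr ⟨by linarith [(σ₂ t).2.1], (σ₂ t).2.2⟩
    calc |(σ₁ (γ t) : ℝ) - (σ₂ t : ℝ)| ≤ |(σ₁ (γ t) : ℝ)| + |(σ₂ t : ℝ)| := abs_sub _ _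
      _ ≤ 2 := by linarith
  refine ⟨γ, hγ, fun t => ?_, fun t => ?_⟩
  · calc |F₁ (γ t) - F₂ t| ≤ S1 := le_ciSup hbd1 t
      _ ≤ S1 + S2 := le_add_of_nonneg_right hS2_nonneg
      _ = c := hc
      _ < ε := hcε
  · calc |(σ₁ (γ t) : ℝ) - (σ₂ t : ℝ)| ≤ S2 := le_ciSup hbd2 t
      _ ≤ S1 + S2 := le_add_of_nonneg_left hS1_nonneg
      _ = c := hc
      _ < ε := hcε

theorem equiv_implies_visualizations_eq (F₁ F₂ : unitInterval → ℝ)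
    (σ₁ σ₂ : unitInterval → unitInterval)
    (hF₁ : Cadlag F₁) (hF₂ : Cadlag F₂) (hσ₁ : InSigma σ₁) (hσ₂ : InSigma σ₂)
    (h : rhoPlus (F₁, σ₁) (F₂, σ₂) = 0) :
    ∀ s : unitInterval, F₁ (rcInv σ₁ s) = F₂ (rcInv σ₂ s) := by
  intro s
  set t₁ := rcInv σ₁ s with ht₁_def
  set t₂ := rcInv σ₂ s with ht₂_def
  have hσt₁ : σ₁ t₁ = s := rcInv_apply hσ₁ s
  have hσt₂ : σ₂ t₂ = s := rcInv_apply hσ₂ s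
  -- it suffices to show the difference is < ε for every ε > 0
  suffices key : ∀ ε : ℝ, 0 < ε → |F₁ t₁ - F₂ t₂| < ε by
    by_contra hne
    have hpos : 0 < |F₁ t₁ - F₂ t₂| := abs_pos.mpr (sub_ne_zero.mpr hne)
    exact absurd (key _ hpos) (lt_irrefl _)
  intro ε hε
  by_cases hs : (s : ℝ) < 1
  · -- main case : s < 1
    have hε3 : 0 < ε / 3 := by linarith
    -- t₁ < 1 and t₂ < 1
    have ht₁lt : t₁ < 1 := by
      have h1 : t₁ ≤ (1 : unitInterval) := by exact_mod_cast t₁.2.2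
      rcases h1.lt_or_eq with h | h
      · exact h
      · exfalso
        rw [h, hσ₁.apply_one] at hσt₁
        rw [← hσt₁] at hs
        norm_num at hs
    have ht₂lt : t₂ < 1 := by
      have h1 : t₂ ≤ (1 : unitInterval) := by exact_mod_cast t₂.2.2
      rcases h1.lt_or_eq with h | h
      · exact h
      · exfalso
        rw [h, hσ₂.apply_one] at hσt₂
        rw [← hσt₂] at hs
        norm_num at hs
    have ht₁lt' : (t₁ : ℝ) < 1 := by exact_mod_cast ht₁lt
    have ht₂lt' : (t₂ : ℝ) < 1 := by exact_mod_cast ht₂lt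
    -- right neighborhood of t₁ where F₁ is ε/3-close to F₁ t₁
    have h1ev : ∀ᶠ u in nhdsWithin t₁ (Set.Ioi t₁), |F₁ u - F₁ t₁| < ε / 3 := by
      have := (Metric.tendsto_nhds.mp (hF₁.1 t₁ ht₁lt')) (ε / 3) hε3
      filter_upwards [this] with u hu
      rwa [Real.dist_eq] at hu
    obtain ⟨u₁, hu₁mem, hu₁sub⟩ :=
      (mem_nhdsGT_iff_exists_Ioo_subset' ht₁lt).mp h1ev
    -- margin α
    have hσu₁ : s < σ₁ u₁ := lt_of_rcInv_lt hσ₁ hu₁mem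
    set α := (σ₁ u₁ : ℝ) - (s : ℝ) with hα_def
    have hα : 0 < α := by
      have : (s : ℝ) < (σ₁ u₁ : ℝ) := by exact_mod_cast hσu₁
      linarith
    -- right neighborhood of t₂ where F₂ is ε/3-close to F₂ t₂
    have h2ev : ∀ᶠ u in nhdsWithin t₂ (Set.Ioi t₂), |F₂ u - F₂ t₂| < ε / 3 := by
      have := (Metric.tendsto_nhds.mp (hF₂.1 t₂ ht₂lt')) (ε / 3) hε3
      filter_upwards [this] with u hu
      rwa [Real.dist_eq] at hu
    -- eventually σ₂ u < s + α/2 near t₂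
    have hσ₂cont : Filter.Tendsto (fun u => (σ₂ u : ℝ)) (nhds t₂) (nhds (s : ℝ)) := by
      have : Continuous fun u => (σ₂ u : ℝ) := continuous_subtype_val.comp hσ₂.1
      have h0 := this.tendsto t₂
      rwa [hσt₂] at h0
    have h3ev : ∀ᶠ u in nhdsWithin t₂ (Set.Ioi t₂), (σ₂ u : ℝ) < (s : ℝ) + α / 2 :=
      Filter.Eventually.filter_mono nhdsWithin_le_nhds
        (hσ₂cont.eventually_lt_const (by linarith))
    -- pick t ∈ Ioi t₂ satisfying both
    haveI : (nhdsWithin t₂ (Set.Ioi t₂)).NeBot :=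
      nhdsGT_neBot_of_exists_gt ⟨1, ht₂lt⟩
    obtain ⟨t, htF, htσ, htI⟩ :=
      (h2ev.and (h3ev.and eventually_mem_nhdsWithin)).exists
    have ht₂t : t₂ < t := htI
    have hσ₂t : s < σ₂ t := lt_of_rcInv_lt hσ₂ ht₂t
    have hσ₂t' : (s : ℝ) < (σ₂ t : ℝ) := by exact_mod_cast hσ₂t
    set β := (σ₂ t : ℝ) - (s : ℝ) with hβ_def
    have hβ : 0 < β := by linarith
    set δ := min (min (α / 2) β) (ε / 3) with hδ_def
    have hδ : 0 < δ := lt_min (lt_min (by linarith) hβ) hε3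
    obtain ⟨γ, hγ, hp, hq⟩ := extract_gamma hF₁ hF₂ h hδ
    -- γ t ∈ Ioo t₁ u₁
    have hqt := hq t
    have habs := abs_lt.mp hqt
    have hlow : (s : ℝ) < (σ₁ (γ t) : ℝ) := by
      have hδβ : δ ≤ β := (min_le_left _ _).trans (min_le_right _ _)
      have : (σ₂ t : ℝ) - δ < (σ₁ (γ t) : ℝ) := by linarith [habs.1]
      linarith
    have hhigh : (σ₁ (γ t) : ℝ) < (σ₁ u₁ : ℝ) := by
      have hδα : δ ≤ α / 2 := (min_le_left _ _).trans (min_le_left _ _)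
      have : (σ₁ (γ t) : ℝ) < (σ₂ t : ℝ) + δ := by linarith [habs.2]
      have hu := htσ
      rw [hα_def] at *
      linarith
    have hγt_gt : t₁ < γ t := by
      by_contra hc
      push_neg at hc
      have := hσ₁.2.1 hc
      rw [hσt₁] at this
      exact absurd hlow (not_lt.mpr (by exact_mod_cast this))
    have hγt_lt : γ t < u₁ := by
      by_contra hc
      push_neg at hc
      have := hσ₁.2.1 hc
      exact absurd hhigh (not_lt.mpr (by exact_mod_cast this))
    have hF₁close : |F₁ (γ t) - F₁ t₁| < ε / 3 := hu₁sub ⟨hγt_gt, hγt_lt⟩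
    have hF₁F₂ : |F₁ (γ t) - F₂ t| < ε / 3 :=
      (hp t).trans_le ((min_le_right _ _))
    have htri : |F₁ t₁ - F₂ t₂| ≤
        |F₁ t₁ - F₁ (γ t)| + |F₁ (γ t) - F₂ t| + |F₂ t - F₂ t₂| := by
      calc |F₁ t₁ - F₂ t₂| ≤ |F₁ t₁ - F₂ t| + |F₂ t - F₂ t₂| := abs_sub_le _ _ _
        _ ≤ (|F₁ t₁ - F₁ (γ t)| + |F₁ (γ t) - F₂ t|) + |F₂ t - F₂ t₂| :=
            add_le_add_left (abs_sub_le _ _ _) _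
    have h1' : |F₁ t₁ - F₁ (γ t)| < ε / 3 := by rwa [abs_sub_comm]
    linarith [htF]
  · -- case s = 1
    have hs1 : s = 1 := by
      have h1 : (s : ℝ) ≤ 1 := s.2.2
      have : (s : ℝ) = 1 := le_antisymm h1 (not_lt.mp hs)
      exact Subtype.ext this
    have ht₁1 : t₁ = 1 := by
      rw [ht₁_def, hs1]
      refine le_antisymm (by exact_mod_cast (rcInv σ₁ 1).2.2) ?_
      exact @le_sSup unitInterval _ {t : unitInterval | σ₁ t ≤ 1} 1 (by exact_mod_cast (σ₁ 1).2.2)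
    have ht₂1 : t₂ = 1 := by
      rw [ht₂_def, hs1]
      refine le_antisymm (by exact_mod_cast (rcInv σ₂ 1).2.2) ?_
      exact @le_sSup unitInterval _ {t : unitInterval | σ₂ t ≤ 1} 1 (by exact_mod_cast (σ₂ 1).2.2)
    obtain ⟨γ, hγ, hp, -⟩ := extract_gamma hF₁ hF₂ h hε
    have := hp 1
    rw [hγ.apply_one] at this
    rw [ht₁1, ht₂1]
    exact this
end
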